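/- The variety SUB_2 is locally finite: every lattice that is generated by finitely many elements and embeds into Co(P) for some poset P of length at most 2 is finite. -/

import Mathlib

/-! Common definitions: lattices of order-convex subsets of a poset,
length of a poset, the identities (S), (U), (B), (L2), (H_n), (H_{m,n}),
join-irreducibility, the join-dependency relation, join-seeds,
the posets P_{I,J}, tree-like posets, D-closed sets,
and complete lattice congruences. -/

open Set

/-- The lattice `Co P` of all order-convex subsets of a poset `P`. -/
def Co (P : Type*) [PartialOrder P] : Type _ := {s : Set P // s.OrdConnected}

namespace Co

variable {P : Type*} [PartialOrder P]

instance : PartialOrder (Co P) := Subtype.partialOrder _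

instance : InfSet (Co P) :=
  ⟨fun S => ⟨⋂ s ∈ S, s.1, Set.ordConnected_biInter fun s _ => s.2⟩⟩

noncomputable instance : CompleteLattice (Co P) :=
  completeLatticeOfInf (Co P) (by
    intro S
    constructor
    · intro t ht
      exact Set.biInter_subset_of_mem (t := fun s => s.1) ht
    · intro b hb
      exact Set.subset_iInter₂ fun t ht => hb ht)

/-- The order-convex subset of `P` with underlying set `X`. -/
def mk' (X : Set P) (hX : X.OrdConnected) : Co P := ⟨X, hX⟩

/-- The singleton `{p}`, as an order-convex set. -/
def sngl (p : P) : Co P := ⟨{p}, Set.ordConnected_singleton⟩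

/-- The empty order-convex set. -/
def emp : Co P := ⟨∅, Set.ordConnected_empty⟩

end Co

/-- `lengthLE P n` states that the poset `P` has length at most `n`, that is,
every finite chain of `P` has at most `n + 1` elements. -/
def lengthLE (P : Type*) [PartialOrder P] (n : ℕ) : Prop :=
  ∀ C : Finset P, IsChain (· ≤ ·) (C : Set P) → C.card ≤ n + 1

section Identities

/-- The Stirlitz identity (S). -/
def IdS (L : Type*) [Lattice L] : Prop :=
  ∀ a b b₀ b₁ c : L,
    a ⊓ ((b ⊓ (b₀ ⊔ b₁)) ⊔ c) =
      (a ⊓ (b ⊓ (b₀ ⊔ b₁)))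
      ⊔ (a ⊓ (b₀ ⊔ c) ⊓ ((b ⊓ (b₀ ⊔ b₁) ⊓ (a ⊔ b₀)) ⊔ c))
      ⊔ (a ⊓ (b₁ ⊔ c) ⊓ ((b ⊓ (b₀ ⊔ b₁) ⊓ (a ⊔ b₁)) ⊔ c))

/-- The Udav identity (U). -/
def IdU (L : Type*) [Lattice L] : Prop :=
  ∀ x x₀ x₁ x₂ : L,
    x ⊓ (x₀ ⊔ x₁) ⊓ (x₁ ⊔ x₂) ⊓ (x₀ ⊔ x₂) =
      (x ⊓ x₀ ⊓ (x₁ ⊔ x₂)) ⊔ (x ⊓ x₁ ⊓ (x₀ ⊔ x₂)) ⊔ (x ⊓ x₂ ⊓ (x₀ ⊔ x₁))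

/-- The Bond identity (B). -/
def IdB (L : Type*) [Lattice L] : Prop :=
  ∀ x a₀ a₁ b₀ b₁ : L,
    x ⊓ (a₀ ⊔ a₁) ⊓ (b₀ ⊔ b₁) =
      (x ⊓ a₀ ⊓ (b₀ ⊔ b₁)) ⊔ (x ⊓ a₁ ⊓ (b₀ ⊔ b₁))
      ⊔ (x ⊓ b₀ ⊓ (a₀ ⊔ a₁)) ⊔ (x ⊓ b₁ ⊓ (a₀ ⊔ a₁))
      ⊔ (x ⊓ (a₀ ⊔ a₁) ⊓ (b₀ ⊔ b₁) ⊓ (a₀ ⊔ b₀) ⊓ (a₁ ⊔ b₁))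
      ⊔ (x ⊓ (a₀ ⊔ a₁) ⊓ (b₀ ⊔ b₁) ⊓ (a₀ ⊔ b₁) ⊓ (a₁ ⊔ b₀))

/-- The identity (L₂). -/
def IdL2 (L : Type*) [Lattice L] : Prop :=
  ∀ a b b' c c' : L,
    a ⊓ ((b ⊓ (c ⊔ c')) ⊔ b') =
      (a ⊓ b ⊓ (c ⊔ c')) ⊔ (a ⊓ ((b ⊓ c) ⊔ b')) ⊔ (a ⊓ ((b ⊓ c') ⊔ b'))

variable {L : Type*} [Lattice L]

/-- The lattice polynomial `U_{i,n}` (in the variables `x₀, …, xₙ, x'₁, …, x'ₙ`). -/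
def Upoly (x x' : ℕ → L) (n : ℕ) (i : ℕ) : L :=
  if h : n ≤ i then x n
  else x i ⊓ (Upoly x x' n (i + 1) ⊔ x' (i + 1))
  termination_by n - i
  decreasing_by omega

/-- The lattice polynomial `V_{i,j,n}`. -/
def Vpoly (x x' : ℕ → L) (n i : ℕ) (j : ℕ) : L :=
  if h : i ≤ j then (x i ⊓ Upoly x x' n (i + 1)) ⊔ (x i ⊓ x' (i + 1))
  else x j ⊓ (Vpoly x x' n i (j + 1) ⊔ x' (j + 1))
  termination_by i - j
  decreasing_by omega

/-- The lattice polynomial `W_{i,j,n}`. -/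
def Wpoly (x x' : ℕ → L) (n i : ℕ) (j : ℕ) : L :=
  if h : i ≤ j then
    x i ⊓ (x' (i + 1) ⊔ x' (i + 2)) ⊓ ((Upoly x x' n (i + 1) ⊓ (x i ⊔ x' (i + 2))) ⊔ x' (i + 1))
  else x j ⊓ (Wpoly x x' n i (j + 1) ⊔ x' (j + 1))
  termination_by i - j
  decreasing_by omega

/-- `bigJoin f k = f 0 ⊔ f 1 ⊔ ⋯ ⊔ f k`. -/
def bigJoin (f : ℕ → L) : ℕ → L
  | 0 => f 0
  | k + 1 => bigJoin f k ⊔ f (k + 1)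

end Identities

/-- The identity (Hₙ) : `Uₙ = ⋁_{0 ≤ i ≤ n-1} V_{i,n} ∨ ⋁_{0 ≤ i ≤ n-2} W_{i,n}`
(intended for `n ≥ 1`). -/
def IdH (n : ℕ) (L : Type*) [Lattice L] : Prop :=
  ∀ x x' : ℕ → L,
    Upoly x x' n 0 =
      bigJoin (fun i =>
        if i + 2 ≤ n then Vpoly x x' n i 0 ⊔ Wpoly x x' n i 0 else Vpoly x x' n i 0) (n - 1)

/-- The identity (H_{m,n}) (intended for `m, n ≥ 1`); the common base point is
`x 0 = y 0 = t`. -/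
def IdHmn (m n : ℕ) (L : Type*) [Lattice L] : Prop :=
  ∀ x x' y y' : ℕ → L, x 0 = y 0 →
    Upoly x x' m 0 ⊓ Upoly y y' n 0 =
      bigJoin (fun i =>
          if i + 2 ≤ m then
            (Vpoly x x' m i 0 ⊓ Upoly y y' n 0) ⊔ (Wpoly x x' m i 0 ⊓ Upoly y y' n 0)
          else Vpoly x x' m i 0 ⊓ Upoly y y' n 0) (m - 1)
      ⊔ bigJoin (fun j =>
          if j + 2 ≤ n then
            (Upoly x x' m 0 ⊓ Vpoly y y' n j 0) ⊔ (Upoly x x' m 0 ⊓ Wpoly y y' n j 0)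
          else Upoly x x' m 0 ⊓ Vpoly y y' n j 0) (n - 1)
      ⊔ (Upoly x x' m 0 ⊓ Upoly y y' n 0 ⊓ (x 1 ⊔ y' 1) ⊓ (x' 1 ⊔ y 1))

/-- `p` is join-irreducible: `p = x ⊔ y` implies `p = x` or `p = y`. -/
def JIrr {L : Type*} [Lattice L] (p : L) : Prop :=
  ∀ x y : L, p = x ⊔ y → p = x ∨ p = y

/-- The join-dependency relation `p D q`. -/
def DRel {L : Type*} [Lattice L] (p q : L) : Prop :=
  p ≠ q ∧ ∃ x : L, p ≤ q ⊔ x ∧ ∀ y < q, ¬ p ≤ y ⊔ x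

/-- A subset `S` of a lattice `L` is a join-seed. -/
def JoinSeed (L : Type*) [Lattice L] (S : Set L) : Prop :=
  (∀ p ∈ S, JIrr p) ∧
  (∀ a : L, ∃ T ⊆ S, IsLUB T a) ∧
  (∀ p ∈ S, ∀ a b : L, p ≤ a ⊔ b → ¬ p ≤ a → ¬ p ≤ b →
    ∃ x ∈ S, ∃ y ∈ S, x ≤ a ∧ y ≤ b ∧ p ≤ x ⊔ y ∧
      (∀ x' < x, ¬ p ≤ x' ⊔ y) ∧ (∀ y' < y, ¬ p ≤ x ⊔ y'))

/-- The poset `P_{I,J} = I ∪ {p} ∪ J`, where every element of `I` is below `p`,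
`p` is below every element of `J`, every element of `I` is below every element
of `J`, and there are no other strict comparabilities. -/
def PIJ (I J : Type*) : Type _ := I ⊕ (Unit ⊕ J)

namespace PIJ

variable {I J : Type*}

/-- The rank (height) of an element of `P_{I,J}`. -/
def rank (a : PIJ I J) : ℕ :=
  Sum.elim (fun _ => 0) (Sum.elim (fun _ => 1) fun _ => 2) a

instance : PartialOrder (PIJ I J) where
  le a b := a = b ∨ rank a < rank b
  le_refl a := Or.inl rfl
  le_trans a b c hab hbc := by
    rcases hab with rfl | h
    · exact hbc
    · rcases hbc with rfl | h'
      · exact Or.inr h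
      · exact Or.inr (h.trans h')
  le_antisymm a b hab hba := by
    rcases hab with rfl | h
    · rfl
    · rcases hba with rfl | h'
      · rfl
      · omega

end PIJ

/-- A poset is tree-like if it has no infinite bounded chain and between any two
points there is at most one repetition-free finite path with respect to the
covering relation. -/
def TreeLike (P : Type*) [PartialOrder P] : Prop :=
  (∀ C : Set P, IsChain (· ≤ ·) C → BddAbove C → BddBelow C → C.Finite) ∧
  (∀ a b : P, ∀ l₁ l₂ : List P,
    l₁.Nodup → l₁.head? = some a → l₁.getLast? = some b →
      l₁.Chain' (fun u v => u ⋖ v ∨ v ⋖ u) →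
    l₂.Nodup → l₂.head? = some a → l₂.getLast? = some b →
      l₂.Chain' (fun u v => u ⋖ v ∨ v ⋖ u) →
    l₁ = l₂)

/-- A subset `U` of a poset `P` is `D`-closed. -/
def DClosed {P : Type*} [PartialOrder P] (U : Set P) : Prop :=
  ∀ x p y : P, x < p → p < y → (x ∈ U ∨ y ∈ U) → p ∈ U

/-- A complete congruence of a complete lattice. -/
structure IsCompleteCongr {L : Type*} [CompleteLattice L] (θ : L → L → Prop) : Prop where
  refl : ∀ x, θ x x
  symm : ∀ {x y}, θ x y → θ y x
  trans : ∀ {x y z}, θ x y → θ y z → θ x z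
  sup : ∀ {a b c d}, θ a b → θ c d → θ (a ⊔ c) (b ⊔ d)
  inf : ∀ {a b c d}, θ a b → θ c d → θ (a ⊓ c) (b ⊓ d)
  cSup : ∀ (x : L) (Y : Set L), Y.Nonempty → (∀ y ∈ Y, θ x y) → θ x (sSup Y)
  cInf : ∀ (x : L) (Y : Set L), Y.Nonempty → (∀ y ∈ Y, θ x y) → θ x (sInf Y)

/-- The map `h_U : Co(P) → Co(P ∖ U)`, `X ↦ X ∖ U`. -/
def coRestrict {P : Type*} [PartialOrder P] (U : Set P) (X : Co P) :
    Co {p : P // p ∉ U} :=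
  ⟨Subtype.val ⁻¹' X.1, by
    constructor
    rintro a ha b hb z hz
    exact X.2.out ha hb ⟨hz.1, hz.2⟩⟩

/-- The lattice `D(P)` of all `D`-closed subsets of a poset `P`. -/
def DSub (P : Type*) [PartialOrder P] : Type _ := {U : Set P // DClosed U}

namespace DSub

variable {P : Type*} [PartialOrder P]

instance : PartialOrder (DSub P) := Subtype.partialOrder _

instance : InfSet (DSub P) :=
  ⟨fun S => ⟨⋂ U ∈ S, U.1, by
    intro x p y h1 h2 h3
    simp only [Set.mem_iInter] at h3 ⊢
    intro U hU
    exact U.2 x p y h1 h2 (h3.imp (fun h => h U hU) fun h => h U hU)⟩⟩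

noncomputable instance : CompleteLattice (DSub P) :=
  completeLatticeOfInf (DSub P) (by
    intro S
    constructor
    · intro t ht
      exact Set.biInter_subset_of_mem (t := fun U => U.1) ht
    · intro b hb
      exact Set.subset_iInter₂ fun t ht => hb ht)

end DSub

-- auxiliary
section Aux
variable {P : Type*} [PartialOrder P]

lemma Co.le_iff {X Y : Co P} : X ≤ Y ↔ X.1 ⊆ Y.1 := Iff.rfl

lemma no4chain (hlen : lengthLE P 2) {a b c d : P} (h1 : a < b) (h2 : b < c)
    (h3 : c < d) : False := by
  classical
  have hab : a ≤ b := h1.le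
  have hbc : b ≤ c := h2.le
  have hcd : c ≤ d := h3.le
  have hC : IsChain (· ≤ ·) (({a, b, c, d} : Finset P) : Set P) := by
    intro x hx y hy _
    simp only [Finset.coe_insert, Set.mem_insert_iff, Finset.coe_singleton,
      Set.mem_singleton_iff] at hx hy
    rcases hx with rfl | rfl | rfl | rfl <;> rcases hy with rfl | rfl | rfl | rfl <;>
      first
        | exact Or.inl le_rfl
        | exact Or.inl hab | exact Or.inr hab
        | exact Or.inl hbc | exact Or.inr hbc
        | exact Or.inl hcd | exact Or.inr hcd
        | exact Or.inl (hab.trans hbc) | exact Or.inr (hab.trans hbc)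
        | exact Or.inl (hbc.trans hcd) | exact Or.inr (hbc.trans hcd)
        | exact Or.inl ((hab.trans hbc).trans hcd)
        | exact Or.inr ((hab.trans hbc).trans hcd)
  have hcard : ({a, b, c, d} : Finset P).card = 4 := by
    have h1' := h1.ne
    have h2' := h2.ne
    have h3' := h3.ne
    have h4' := (h1.trans h2).ne
    have h5' := (h2.trans h3).ne
    have h6' := ((h1.trans h2).trans h3).ne
    rw [Finset.card_insert_of_notMem (by simp [h1', h4', h6']),
      Finset.card_insert_of_notMem (by simp [h2', h5']),
      Finset.card_insert_of_notMem (by simp [h3']), Finset.card_singleton]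
  have := hlen {a, b, c, d} hC
  omega

lemma Co.coe_inf (X Y : Co P) : (X ⊓ Y).1 = X.1 ∩ Y.1 := by
  have h1 : (X ⊓ Y).1 ⊆ X.1 ∩ Y.1 :=
    Set.subset_inter (Co.le_iff.1 inf_le_left) (Co.le_iff.1 inf_le_right)
  have Z : Co P := ⟨X.1 ∩ Y.1, X.2.inter Y.2⟩
  have h2 : X.1 ∩ Y.1 ⊆ (X ⊓ Y).1 := by
    have hz : (⟨X.1 ∩ Y.1, X.2.inter Y.2⟩ : Co P) ≤ X ⊓ Y :=
      le_inf (α := Co P) (Co.le_iff.2 Set.inter_subset_left) (Co.le_iff.2 Set.inter_subset_right)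
    exact Co.le_iff.1 hz
  exact le_antisymm h1 h2

lemma Co.coe_sup (hlen : lengthLE P 2) (X Y : Co P) :
    (X ⊔ Y).1 = X.1 ∪ Y.1 ∪
      {p | ∃ x ∈ X.1 ∪ Y.1, ∃ y ∈ X.1 ∪ Y.1, x < p ∧ p < y} := by
  set W : Set P := X.1 ∪ Y.1 ∪ {p | ∃ x ∈ X.1 ∪ Y.1, ∃ y ∈ X.1 ∪ Y.1, x < p ∧ p < y}
    with hWdef
  have hW : W.OrdConnected := by
    constructor
    intro a ha b hb z hz
    rcases eq_or_lt_of_le hz.1 with rfl | haz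
    · exact ha
    rcases eq_or_lt_of_le hz.2 with rfl | hzb
    · exact hb
    rcases ha with ha | ha
    · rcases hb with hb | hb
      · exact Or.inr ⟨a, ha, b, hb, haz, hzb⟩
      · obtain ⟨-, -, y, -, hy1, hy2⟩ := hb
        exact absurd (no4chain hlen haz hzb hy2) (by simp)
    · obtain ⟨x, -, -, -, hx1, -⟩ := ha
      exact absurd (no4chain hlen hx1 haz hzb) (by simp)
  have h1 : X ⊔ Y ≤ ⟨W, hW⟩ :=
    sup_le (Co.le_iff.2 fun p hp => Or.inl (Or.inl hp))
      (Co.le_iff.2 fun p hp => Or.inl (Or.inr hp))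
  have h2 : (⟨W, hW⟩ : Co P) ≤ X ⊔ Y := by
    refine Co.le_iff.2 ?_
    rintro p (hp | ⟨x, hx, y, hy, hxp, hpy⟩)
    · rcases hp with hp | hp
      · exact Co.le_iff.1 (le_sup_left (a := X) (b := Y)) hp
      · exact Co.le_iff.1 (le_sup_right (a := X) (b := Y)) hp
    · have hx' : x ∈ (X ⊔ Y).1 := by
        rcases hx with h | h
        · exact Co.le_iff.1 (le_sup_left (a := X) (b := Y)) h
        · exact Co.le_iff.1 (le_sup_right (a := X) (b := Y)) h
      have hy' : y ∈ (X ⊔ Y).1 := by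
        rcases hy with h | h
        · exact Co.le_iff.1 (le_sup_left (a := X) (b := Y)) h
        · exact Co.le_iff.1 (le_sup_right (a := X) (b := Y)) h
      exact (X ⊔ Y).2.out hx' hy' ⟨hxp.le, hpy.le⟩
  have := le_antisymm h1 h2
  exact congrArg Subtype.val this

end Aux


theorem stmt4.{u} (L : Type u) [Lattice L]
    (hgen : ∃ s : Finset L, latticeClosure (↑s : Set L) = Set.univ)
    (hsub : ∃ (P : Type u) (_ : PartialOrder P), lengthLE P 2 ∧
      ∃ f : LatticeHom L (Co P), Function.Injective f) :
    Finite L := by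
  classical
  obtain ⟨s, hs⟩ := hgen
  obtain ⟨P, _, hlen, f, hf⟩ := hsub
  let A := {x // x ∈ s}
  let t : P → A → Prop := fun p i => p ∈ (f i.1).1
  let S : P → Set ((A → Prop) × (A → Prop)) :=
    fun p => {uv | ∃ x y : P, x < p ∧ p < y ∧ uv = (t x, t y)}
  let c : P → (A → Prop) × Set ((A → Prop) × (A → Prop)) := fun p => (t p, S p)
  have hSempty : ∀ x p y : P, x < p → p < y → S x = ∅ ∧ S y = ∅ := by
    intro x p y hxp hpy
    constructor
    · ext uv
      simp only [S, Set.mem_setOf_eq, Set.mem_empty_iff_false, iff_false, not_exists]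
      intro a b hh
      exact no4chain hlen hh.1 hxp hpy
    · ext uv
      simp only [S, Set.mem_setOf_eq, Set.mem_empty_iff_false, iff_false, not_exists]
      intro a b hh
      exact no4chain hlen hxp hpy hh.2.1
  let G : Set (Co P) := {X | ∃ F : ((A → Prop) × Set ((A → Prop) × (A → Prop))) → Prop,
    ∀ p, p ∈ X.1 ↔ F (c p)}
  have hgenG : ∀ x ∈ s, f x ∈ G := fun x hx =>
    ⟨fun k => k.1 ⟨x, hx⟩, fun p => Iff.rfl⟩
  have hinfG : ∀ X ∈ G, ∀ Y ∈ G, X ⊓ Y ∈ G := by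
    rintro X ⟨F, hF⟩ Y ⟨F', hF'⟩
    refine ⟨fun k => F k ∧ F' k, fun p => ?_⟩
    have hmem : p ∈ (X ⊓ Y).1 ↔ p ∈ X.1 ∧ p ∈ Y.1 := by
      rw [Co.coe_inf]; exact Iff.rfl
    rw [hmem, hF p, hF' p]
  have hsupG : ∀ X ∈ G, ∀ Y ∈ G, X ⊔ Y ∈ G := by
    rintro X ⟨F, hF⟩ Y ⟨F', hF'⟩
    refine ⟨fun k => F k ∨ F' k ∨ ∃ uv ∈ k.2,
      (F (uv.1, ∅) ∨ F' (uv.1, ∅)) ∧ (F (uv.2, ∅) ∨ F' (uv.2, ∅)), fun p => ?_⟩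
    have hmem : p ∈ (X ⊔ Y).1 ↔ (p ∈ X.1 ∪ Y.1 ∨
        ∃ x ∈ X.1 ∪ Y.1, ∃ y ∈ X.1 ∪ Y.1, x < p ∧ p < y) := by
      rw [Co.coe_sup hlen]; exact Iff.rfl
    constructor
    · intro h
      rcases hmem.1 h with (h | h) | ⟨x, hx, y, hy, hxp, hpy⟩
      · exact Or.inl ((hF p).1 h)
      · exact Or.inr (Or.inl ((hF' p).1 h))
      · have hcx : c x = (t x, ∅) := by
          simp only [c, (hSempty x p y hxp hpy).1]
        have hcy : c y = (t y, ∅) := by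
          simp only [c, (hSempty x p y hxp hpy).2]
        refine Or.inr (Or.inr ⟨(t x, t y), ⟨x, y, hxp, hpy, rfl⟩, ?_, ?_⟩)
        · rcases hx with h' | h'
          · exact Or.inl (by rw [← hcx]; exact (hF x).1 h')
          · exact Or.inr (by rw [← hcx]; exact (hF' x).1 h')
        · rcases hy with h' | h'
          · exact Or.inl (by rw [← hcy]; exact (hF y).1 h')
          · exact Or.inr (by rw [← hcy]; exact (hF' y).1 h')
    · rintro (h | h | ⟨uv, ⟨x, y, hxp, hpy, rfl⟩, hu, hv⟩)
      · exact hmem.2 (Or.inl (Or.inl ((hF p).2 h)))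
      · exact hmem.2 (Or.inl (Or.inr ((hF' p).2 h)))
      · have hcx : c x = (t x, ∅) := by
          simp only [c, (hSempty x p y hxp hpy).1]
        have hcy : c y = (t y, ∅) := by
          simp only [c, (hSempty x p y hxp hpy).2]
        have hx : x ∈ X.1 ∪ Y.1 := by
          rcases hu with h' | h'
          · exact Or.inl ((hF x).2 (by rw [hcx]; exact h'))
          · exact Or.inr ((hF' x).2 (by rw [hcx]; exact h'))
        have hy : y ∈ X.1 ∪ Y.1 := by
          rcases hv with h' | h'
          · exact Or.inl ((hF y).2 (by rw [hcy]; exact h'))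
          · exact Or.inr ((hF' y).2 (by rw [hcy]; exact h'))
        exact hmem.2 (Or.inr ⟨x, hx, y, hy, hxp, hpy⟩)
  have hall : ∀ x : L, f x ∈ G := by
    intro x
    have hx : x ∈ latticeClosure (↑s : Set L) := hs ▸ Set.mem_univ x
    have hsub' : IsSublattice (f ⁻¹' G) :=
      ⟨fun a ha b hb => by
          simp only [Set.mem_preimage, map_sup]
          exact hsupG _ ha _ hb,
        fun a ha b hb => by
          simp only [Set.mem_preimage, map_inf]
          exact hinfG _ ha _ hb⟩
    exact latticeClosure_min (fun y hy => hgenG y hy) hsub' hx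
  have hfinG : Finite ↥G := by
    let Φ : ↥G → (((A → Prop) × Set ((A → Prop) × (A → Prop))) → Prop) :=
      fun X k => ∃ p, c p = k ∧ p ∈ X.1.1
    have key : ∀ (X : ↥G) (p : P), p ∈ X.1.1 ↔ Φ X (c p) := by
      rintro ⟨X, FX, hFX⟩ p
      constructor
      · intro h; exact ⟨p, rfl, h⟩
      · rintro ⟨q, hq, hqX⟩
        exact (hFX p).2 (hq ▸ (hFX q).1 hqX)
    have hΦ : Function.Injective Φ := by
      intro X Y h
      refine Subtype.ext (Subtype.ext (Set.ext fun p => ?_))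
      rw [key X p, key Y p, h]
    exact Finite.of_injective Φ hΦ
  exact Finite.of_injective (fun x => (⟨f x, hall x⟩ : ↥G))
    fun a b h => hf (congrArg Subtype.val h)
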